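/- For all integers k and l, the class of t^k u · d(t^l u) in Ω_R/dR equals ((l+1) δ_{k+l,-2} + (4l+2) δ_{k+l,-1}) ω₀, where δ is the Kronecker delta. -/

import Mathlib

noncomputable section

set_option synthInstance.maxHeartbeats 1000000
set_option maxHeartbeats 1000000

open Polynomial

/-- The polynomial `u² - (t² + 4t)` over the Laurent polynomial ring `ℂ[t,t⁻¹]`. -/
def threePoly : Polynomial (LaurentPolynomial ℂ) :=
  Polynomial.X ^ 2 - Polynomial.C (LaurentPolynomial.T 2 + 4 * LaurentPolynomial.T 1)

/-- The three-point ring `R = ℂ[t, t⁻¹, u | u² = t² + 4t]`, i.e. the quotient of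
`ℂ[t,t⁻¹][u]` by the ideal generated by `u² - t² - 4t`. -/
abbrev R3 : Type := AdjoinRoot threePoly

/-- `t^k` in `R3`, for `k : ℤ`. -/
def tp (k : ℤ) : R3 := AdjoinRoot.of threePoly (LaurentPolynomial.T k)

/-- the element `t` of `R`. -/
def tR : R3 := tp 1

/-- the element `t⁻¹` of `R`. -/
def tInv : R3 := tp (-1)

/-- the element `u` of `R`. -/
def uR : R3 := AdjoinRoot.root threePoly

abbrev ΩR : Type := KaehlerDifferential ℂ R3

/-- the universal derivation `d : R → Ω_R`. -/
def DR : Derivation ℂ R3 ΩR := KaehlerDifferential.D ℂ R3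

/-- the `ℂ`-subspace `dR ⊆ Ω_R` of exact differentials. -/
def dRsub : Submodule ℂ ΩR := LinearMap.range (DR.toLinearMap)

/-- the quotient `Ω_R/dR`. -/
abbrev ΩRq : Type := ΩR ⧸ dRsub

/-- the class of an element of `Ω_R` in `Ω_R/dR`. -/
def clsR (x : ΩR) : ΩRq := Submodule.Quotient.mk (p := dRsub) x

/-- `ω₀`, the class of `t⁻¹ dt`. -/
def ω0 : ΩRq := clsR (tInv • DR tR)

/-- `ω₁`, the class of `t⁻¹u dt`. -/
def ω1 : ΩRq := clsR ((tInv * uR) • DR tR)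

lemma tp_add (a b : ℤ) : tp a * tp b = tp (a+b) := by
  rw [tp, tp, tp, ← map_mul, ← LaurentPolynomial.T_add]

lemma tp_zero : tp 0 = 1 := by simp [tp, LaurentPolynomial.T_zero]

lemma uR_sq : uR * uR = tp 2 + 4 * tp 1 := by
  have h := AdjoinRoot.mk_self (f := threePoly)
  have : AdjoinRoot.mk threePoly (Polynomial.X ^ 2 - Polynomial.C (LaurentPolynomial.T 2 + 4 * LaurentPolynomial.T 1)) = 0 := h
  rw [map_sub, map_pow, sub_eq_zero] at this
  have h2 : (AdjoinRoot.root threePoly) ^ 2 = AdjoinRoot.of threePoly (LaurentPolynomial.T 2 + 4 * LaurentPolynomial.T 1) := this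
  rw [map_add, map_mul] at h2
  simpa [uR, tp, sq, map_ofNat] using h2

lemma tp_inv_mul : tInv * tR = 1 := by
  rw [tInv, tR, tp_add]; norm_num [tp_zero]

lemma D_tp (m : ℤ) : DR (tp m) = (m : ℂ) • (tp (m-1) • DR tR) := by
  induction m using Int.induction_on with
  | zero => simp [tp_zero]
  | succ i ih =>
    have h1 : tp (i+1) = tp i * tR := by rw [tR, tp_add]
    rw [h1, Derivation.leibniz, ih]
    have h2 : tR * tp ((i:ℤ)-1) = tp i := by rw [tR, tp_add]; ring_nf
    rw [smul_comm (tR) (((i:ℤ):ℂ)) _, smul_smul tR, h2]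
    have e1 : ((i:ℤ)+1-1) = (i:ℤ) := by ring
    have e2 : (((i:ℤ)+1 : ℤ) : ℂ) = ((i:ℤ):ℂ) + 1 := by push_cast; ring
    rw [e1, e2, add_smul, one_smul]
    abel
  | pred i ih =>
    have h1 : tp (-(i:ℤ)) = tp (-(i:ℤ)-1) * tR := by rw [tR, tp_add]; ring_nf
    have h2 := ih
    have h3 : DR (tp (-(i:ℤ)-1) * tR) = ((-(i:ℤ) : ℤ) : ℂ) • (tp (-(i:ℤ)-1) • DR tR) := by
      rw [← h1, h2]
    rw [Derivation.leibniz] at h3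
    have h4 : tR • DR (tp (-(i:ℤ)-1)) = (((-(i:ℤ) : ℤ) : ℂ) - 1) • (tp (-(i:ℤ)-1) • DR tR) := by
      rw [sub_smul, one_smul, ← h3]; abel
    have h5 : DR (tp (-(i:ℤ)-1)) = tInv • tR • DR (tp (-(i:ℤ)-1)) := by
      rw [smul_smul, tp_inv_mul, one_smul]
    rw [h5, h4, smul_comm, smul_smul, tInv, tp_add]
    have e1 : (-1 + (-(i:ℤ) - 1)) = (-(i:ℤ)-1-1) := by ring
    have e2 : (((-(i:ℤ)-1 : ℤ)) : ℂ) = ((-(i:ℤ) : ℤ) : ℂ) - 1 := by push_cast; ring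
    rw [e1, e2]

lemma u_du : uR • DR uR = tR • DR tR + (2:ℂ) • DR tR := by
  have h4 : DR (4 * tp 1) = (4:ℂ) • DR tR := by
    have e : (4:R3) * tp 1 = (4:ℂ) • tp 1 := by
      rw [← map_ofNat (algebraMap ℂ R3) 4, ← Algebra.smul_def]
    rw [e, Derivation.map_smul, tR]
  have h2 : tp 2 = tR * tR := by rw [tR, tp_add]; norm_num
  have h := congrArg DR uR_sq
  rw [Derivation.leibniz, map_add, h4, h2, Derivation.leibniz] at h
  have key : (2:ℂ) • (uR • DR uR) = (2:ℂ) • (tR • DR tR + (2:ℂ) • DR tR) := by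
    rw [two_smul, h, smul_add, smul_smul, two_smul ℂ (tR • DR tR)]
    norm_num
  have := congrArg (fun z => (2⁻¹:ℂ) • z) key
  simpa [smul_smul] using this

lemma clsR_add (x y : ΩR) : clsR (x + y) = clsR x + clsR y := rfl

lemma clsR_smul (c : ℂ) (x : ΩR) : clsR (c • x) = c • clsR x := rfl

lemma cls_tp_dt (m : ℤ) : clsR (tp m • DR tR) = if m = -1 then ω0 else 0 := by
  by_cases h : m = -1
  · subst h; rw [if_pos rfl]; rfl
  · rw [if_neg h]
    have hm : (((m+1 : ℤ)) : ℂ) ≠ 0 := by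
      rw [Int.cast_ne_zero]; omega
    have hmem : tp m • DR tR ∈ dRsub := by
      refine ⟨(((m+1:ℤ)):ℂ)⁻¹ • tp (m+1), ?_⟩
      show DR ((((m+1:ℤ)):ℂ)⁻¹ • tp (m+1)) = tp m • DR tR
      rw [Derivation.map_smul, D_tp]
      have e : ((m:ℤ)+1-1) = m := by ring
      rw [e, smul_smul, inv_mul_cancel₀ hm, one_smul]
    exact (Submodule.Quotient.mk_eq_zero _).2 hmem

/-- For all integers `k` and `l`, the class of `t^k u · d(t^l u)` in `Ω_R/dR` equals
`((l+1) δ_{k+l,-2} + (4l+2) δ_{k+l,-1}) ω₀`. -/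
theorem stmt_10 (k l : ℤ) :
    clsR ((tp k * uR) • DR (tp l * uR)) =
      ((if k + l = -2 then (l : ℂ) + 1 else 0) +
        (if k + l = -1 then 4 * (l : ℂ) + 2 else 0)) • ω0 := by
  have c1 : tp k * uR * tp l = tp (k+l) * uR := by
    rw [mul_right_comm, tp_add]
  have t1 : (tp k * uR) • (tp l • DR uR)
      = tp (k+l+1) • DR tR + (2:ℂ) • (tp (k+l) • DR tR) := by
    rw [smul_smul, c1, mul_smul, u_du, smul_add, smul_smul, smul_comm]
    rw [tR, tp_add]
  have c2 : tp k * uR * (uR * tp (l-1)) = tp (k+l+1) + 4 * tp (k+l) := by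
    calc tp k * uR * (uR * tp (l-1)) = (uR*uR) * (tp k * tp (l-1)) := by ring
    _ = (tp 2 + 4*tp 1) * tp (k+(l-1)) := by rw [uR_sq, tp_add]
    _ = tp 2 * tp (k+(l-1)) + 4*(tp 1 * tp (k+(l-1))) := by ring
    _ = tp (k+l+1) + 4 * tp (k+l) := by
        rw [tp_add, tp_add]
        have e1 : (2+(k+(l-1))) = k+l+1 := by ring
        have e2 : (1+(k+(l-1))) = k+l := by ring
        rw [e1, e2]
  have h4 : (4:R3) • (tp (k+l) • DR tR) = (4:ℂ) • (tp (k+l) • DR tR) := by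
    rw [← map_ofNat (algebraMap ℂ R3) 4, algebraMap_smul]
  have t2 : (tp k * uR) • (uR • DR (tp l))
      = (l:ℂ) • (tp (k+l+1) • DR tR + (4:ℂ) • (tp (k+l) • DR tR)) := by
    rw [D_tp l, smul_comm uR, smul_comm (tp k * uR), smul_smul uR, smul_smul, c2,
      add_smul, mul_smul, h4]
  have e3 : (k+l+1 = -1) = (k+l = -2) := by
    apply propext; omega
  rw [Derivation.leibniz, smul_add, t1, t2]
  simp only [clsR_add, clsR_smul, cls_tp_dt, e3]
  split_ifs with h1 h2 h2 <;> first | omega | module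

end
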